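/- Let Q be a simple binary join query, G = (V, E) its hypergraph, H ⊆ attset(Q), I the set of isolated vertices, and J a non-empty subset of I. Define Q̃ = {R ∈ Q : scheme(R) ∩ (I \ J) = ∅}, and set H̃ = H ∩ attset(Q̃) and L̃ = attset(Q̃) \ H̃. Then J is precisely the set of isolated attributes determined by Q̃ and H̃, i.e., the set of vertices X ∈ L̃ such that {X} is the only edge incident to X in the subgraph of the hypergraph of Q̃ induced by L̃. -/
import Mathlib


open scoped BigOperators Classical

namespace BinaryJoins

/-! ### Hypergraphs, fractional edge coverings and packings

A hypergraph is given by a finite vertex set `V : Finset α` and a finite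
edge set `E : Finset (Finset α)`.  A weight assignment is a function
`W : Finset α → ℝ` (only its values on `E` matter). -/

variable {α : Type} [DecidableEq α]

/-- The weight of a vertex `X`: the sum of the weights of all edges incident to `X`. -/
def vertexWeight (E : Finset (Finset α)) (W : Finset α → ℝ) (X : α) : ℝ :=
  ∑ e ∈ E.filter (fun e => X ∈ e), W e

/-- `W` is a fractional edge covering: edge weights lie in `[0,1]` and every
vertex of `V` has weight at least 1. -/
def IsFracEdgeCover (V : Finset α) (E : Finset (Finset α)) (W : Finset α → ℝ) : Prop :=
  (∀ e ∈ E, 0 ≤ W e ∧ W e ≤ 1) ∧ ∀ X ∈ V, 1 ≤ vertexWeight E W X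

/-- `W` is a fractional edge packing: edge weights lie in `[0,1]` and every
vertex of `V` has weight at most 1. -/
def IsFracEdgePack (V : Finset α) (E : Finset (Finset α)) (W : Finset α → ℝ) : Prop :=
  (∀ e ∈ E, 0 ≤ W e ∧ W e ≤ 1) ∧ ∀ X ∈ V, vertexWeight E W X ≤ 1

/-- The fractional edge covering number `ρ`: the smallest total weight of a
fractional edge covering. -/
noncomputable def rho (V : Finset α) (E : Finset (Finset α)) : ℝ :=
  sInf {t | ∃ W : Finset α → ℝ, IsFracEdgeCover V E W ∧ t = ∑ e ∈ E, W e}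

/-- The fractional edge packing number `τ`: the largest total weight of a
fractional edge packing. -/
noncomputable def tau (V : Finset α) (E : Finset (Finset α)) : ℝ :=
  sSup {t | ∃ W : Finset α → ℝ, IsFracEdgePack V E W ∧ t = ∑ e ∈ E, W e}

/-- A binary hypergraph: every edge is a 2-element subset of `V`, and every
vertex is incident to at least one edge. -/
def BinaryHG (V : Finset α) (E : Finset (Finset α)) : Prop :=
  (∀ e ∈ E, e ⊆ V ∧ e.card = 2) ∧ ∀ X ∈ V, ∃ e ∈ E, X ∈ e


/-! ### Tuples, relations, and join queries

`dom` is the domain of values; a tuple over a set `U` of attributes is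
represented as a function `att → Option dom` that is `some`-valued exactly
on `U`. -/

variable {att dom : Type}

/-- A (partial) tuple. -/
abbrev Tup (att dom : Type) := att → Option dom

/-- `u` is a tuple over the attribute set `U`. -/
def IsTupleOn (u : Tup att dom) (U : Set att) : Prop :=
  ∀ x : att, (u x).isSome ↔ x ∈ U

/-- The projection (restriction) of a tuple on an attribute set `V`. -/
noncomputable def restrict (u : Tup att dom) (V : Set att) : Tup att dom :=
  fun x => if x ∈ V then u x else none

/-- A relation: a finite set of tuples over a common scheme. -/
structure Relation (att dom : Type) where
  scheme : Finset att
  tuples : Set (Tup att dom)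
  finite : tuples.Finite
  wf : ∀ u ∈ tuples, IsTupleOn u ↑scheme

variable [DecidableEq att]

/-- A join query is a finite set of relations; `attset Q` is the set of all
attributes appearing in the schemes of its relations. -/
def attset (Q : Finset (Relation att dom)) : Finset att :=
  Q.biUnion fun R => R.scheme

/-- The result `Join(Q)` of a join query. -/
def JoinQ (Q : Finset (Relation att dom)) : Set (Tup att dom) :=
  { u | IsTupleOn u ↑(attset Q) ∧ ∀ R ∈ Q, restrict u ↑R.scheme ∈ R.tuples }

/-- A query is simple if no two distinct relations share a scheme. -/
def SimpleQ (Q : Finset (Relation att dom)) : Prop :=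
  ∀ R ∈ Q, ∀ S ∈ Q, R.scheme = S.scheme → R = S

/-- A query is binary if every relation's scheme has exactly two attributes. -/
def BinaryQ (Q : Finset (Relation att dom)) : Prop :=
  ∀ R ∈ Q, R.scheme.card = 2

/-- The input size `m` of a query. -/
noncomputable def inputSize (Q : Finset (Relation att dom)) : ℕ :=
  ∑ R ∈ Q, R.tuples.ncard

/-- The edge set of the hypergraph defined by `Q` (its vertex set is `attset Q`). -/
def edgeSet (Q : Finset (Relation att dom)) : Finset (Finset att) :=
  Q.image fun R => R.scheme

/-! ### Heavy and light values -/

/-- Value `x` is heavy on attribute `X`: some relation of `Q` has at least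
`m/λ` tuples carrying `x` on `X`. -/
def HeavyOn (Q : Finset (Relation att dom)) (lam : ℕ) (X : att) (x : dom) : Prop :=
  ∃ R ∈ Q, X ∈ R.scheme ∧
    (inputSize Q : ℝ) / (lam : ℝ) ≤ ({u ∈ R.tuples | u X = some x}.ncard : ℝ)

/-- Value `x` is heavy (on some attribute). -/
def Heavy (Q : Finset (Relation att dom)) (lam : ℕ) (x : dom) : Prop :=
  ∃ X : att, HeavyOn Q lam X x

/-- Value `x` appears in at least one relation of `Q`. -/
def Appears (Q : Finset (Relation att dom)) (x : dom) : Prop :=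
  ∃ R ∈ Q, ∃ X ∈ R.scheme, ∃ u ∈ R.tuples, u X = some x

/-- Value `x` appears on attribute `Y` in a relation of `Q`. -/
def AppearsOn (Q : Finset (Relation att dom)) (Y : att) (x : dom) : Prop :=
  ∃ R ∈ Q, Y ∈ R.scheme ∧ ∃ u ∈ R.tuples, u Y = some x

/-! ### Configurations and residual queries

Below, `Hv : att → dom → Prop` is the "heavy" predicate (`Hv X x` meaning
that value `x` is heavy on attribute `X`); in applications it is
instantiated with `HeavyOn Q lam`. -/

/-- The set `config(Q, H)` of configurations of `H`: tuples over `H` whose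
values are heavy. -/
def config (Hv : att → dom → Prop) (H : Finset att) : Set (Tup att dom) :=
  { η | IsTupleOn η ↑H ∧ ∀ X ∈ H, ∀ x : dom, η X = some x → Hv X x }

/-- The residual relation `R'ₑ(η)` (over `e \ H`) of the relation `R` with
scheme `e`, under configuration `η` of `H`: projections on `e \ H` of the
tuples of `R` that agree with `η` on `e ∩ H` and are light outside `H`. -/
def ResidualTuples (Q : Finset (Relation att dom)) (Hv : att → dom → Prop)
    (H : Finset att) (η : Tup att dom) (R : Relation att dom) : Set (Tup att dom) :=
  { v | ∃ w ∈ R.tuples,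
      (∀ X ∈ R.scheme ∩ H, w X = η X) ∧
      (∀ Y ∈ R.scheme \ H, ∀ y : dom, w Y = some y → ¬ Hv Y y ∧ Appears Q y) ∧
      v = restrict w ↑(R.scheme \ H) }

/-- The result of the residual query `Q'(η)`: tuples over `attset Q \ H`
whose projection on each active edge `e` belongs to `R'ₑ(η)`. -/
def JoinResidual (Q : Finset (Relation att dom)) (Hv : att → dom → Prop)
    (H : Finset att) (η : Tup att dom) : Set (Tup att dom) :=
  { u | IsTupleOn u ↑(attset Q \ H) ∧
      ∀ R ∈ Q, (R.scheme \ H).Nonempty →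
        restrict u ↑(R.scheme \ H) ∈ ResidualTuples Q Hv H η R }

/-- `m_η`: the total size of the relations of the residual query `Q'(η)`. -/
noncomputable def residualSize (Q : Finset (Relation att dom)) (Hv : att → dom → Prop)
    (H : Finset att) (η : Tup att dom) : ℕ :=
  ∑ R ∈ Q, if (R.scheme \ H).Nonempty then (ResidualTuples Q Hv H η R).ncard else 0

/-- Combine a tuple over a set disjoint from `H` with a configuration `η` over `H`. -/
def combine (H : Finset att) (η u : Tup att dom) : Tup att dom :=
  fun x => if x ∈ H then η x else u x

/-! ### Cross edges, isolated attributes, and the semi-join reduction -/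

/-- `e` is a cross edge w.r.t. `H`: it meets both `H` and its complement. -/
def IsCross (H : Finset att) (e : Finset att) : Prop :=
  (e ∩ H).Nonempty ∧ (e \ H).Nonempty

/-- The set `I` of isolated attributes: light attributes `X` such that `{X}`
is the only edge incident to `X` in the subgraph induced by the light
attributes `L = attset Q \ H`. -/
def isolatedSet (Q : Finset (Relation att dom)) (H : Finset att) : Finset att :=
  (attset Q \ H).filter fun X => ∀ R ∈ Q, X ∈ R.scheme → R.scheme \ H = {X}

/-- The unary tuple over `{X}` carrying value `x`. -/
def singletonTup (X : att) (x : dom) : Tup att dom :=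
  fun Y => if Y = X then some x else none

/-- `X` is a border attribute: a light attribute appearing in a cross edge. -/
def BorderAttr (Q : Finset (Relation att dom)) (H : Finset att) (X : att) : Prop :=
  X ∈ attset Q ∧ X ∉ H ∧ ∃ R ∈ Q, X ∈ R.scheme ∧ IsCross H R.scheme

/-- The set of values of the unary relation `R''_X(η)`: the intersection of
the residual relations `R'ₑ(η)` over all cross edges `e` containing `X`. -/
def Rpp (Q : Finset (Relation att dom)) (Hv : att → dom → Prop)
    (H : Finset att) (η : Tup att dom) (X : att) : Set dom :=
  { x | ∀ R ∈ Q, IsCross H R.scheme → X ∈ R.scheme →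
      singletonTup X x ∈ ResidualTuples Q Hv H η R }

/-- The cartesian product `Join(Q''_J(η))` of the unary relations `R''_X(η)`,
`X ∈ J` (for `J = I` this is `Join(Q''_isolated(η))`). -/
def JoinIso (Q : Finset (Relation att dom)) (Hv : att → dom → Prop)
    (H : Finset att) (η : Tup att dom) (J : Finset att) : Set (Tup att dom) :=
  { u | IsTupleOn u ↑J ∧ ∀ X ∈ J, ∀ x : dom, u X = some x → x ∈ Rpp Q Hv H η X }

/-! ### The query `Q*` and its hypergraph -/

/-- The result `Join(Q*)` of the query `Q*`: tuples over `I ∪ H` that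
(i) project into `R_e` for every cross edge `e` incident to `I`, (ii) take a
heavy value on every attribute of `H`, and (iii) take, on every `Y ∈ I`, a
value appearing on `Y` in a relation of `Q`. -/
def JoinStar (Q : Finset (Relation att dom)) (Hv : att → dom → Prop)
    (H : Finset att) : Set (Tup att dom) :=
  { t | IsTupleOn t ↑(isolatedSet Q H ∪ H) ∧
      (∀ R ∈ Q, IsCross H R.scheme → (R.scheme ∩ isolatedSet Q H).Nonempty →
        restrict t ↑R.scheme ∈ R.tuples) ∧
      (∀ X ∈ H, ∀ x : dom, t X = some x → Hv X x) ∧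
      (∀ Y ∈ isolatedSet Q H, ∀ y : dom, t Y = some y → AppearsOn Q Y y) }

/-- The edge set `E*` of the hypergraph `G*` of `Q*`: the cross edges of `G`
incident to `I`, a unary edge `{X}` for each `X ∈ H`, and a unary edge `{Y}`
for each `Y ∈ I`.  (Its vertex set is `V* = I ∪ H`.) -/
noncomputable def starEdges (Q : Finset (Relation att dom)) (H : Finset att) :
    Finset (Finset att) :=
  (edgeSet Q).filter (fun e => IsCross H e ∧ (e ∩ isolatedSet Q H).Nonempty)
    ∪ H.image (fun X => {X}) ∪ (isolatedSet Q H).image (fun Y => {Y})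

/-! ### The reduced query `Q''(η)` -/

/-- The reduced relation `R''ₑ(η)` of a light edge `e = scheme R`: the tuples
of `R'ₑ(η)` whose values on border attributes survive the semi-join
reduction. -/
def ReducedTuples (Q : Finset (Relation att dom)) (Hv : att → dom → Prop)
    (H : Finset att) (η : Tup att dom) (R : Relation att dom) : Set (Tup att dom) :=
  { u | u ∈ ResidualTuples Q Hv H η R ∧
      ∀ X ∈ R.scheme, BorderAttr Q H X → ∀ x : dom, u X = some x → x ∈ Rpp Q Hv H η X }

/-- The result `Join(Q''_light(η))`: tuples over `L \ I` whose projection on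
every light edge belongs to the corresponding reduced relation. -/
def JoinLight (Q : Finset (Relation att dom)) (Hv : att → dom → Prop)
    (H : Finset att) (η : Tup att dom) : Set (Tup att dom) :=
  { u | IsTupleOn u ↑((attset Q \ H) \ isolatedSet Q H) ∧
      ∀ R ∈ Q, R.scheme ∩ H = ∅ → restrict u ↑R.scheme ∈ ReducedTuples Q Hv H η R }

/-- The result `Join(Q''(η))` of the reduced query: tuples over `L` whose
projections on light edges are in the reduced relations and whose values on
isolated attributes are in the corresponding unary relations. -/
def JoinReduced (Q : Finset (Relation att dom)) (Hv : att → dom → Prop)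
    (H : Finset att) (η : Tup att dom) : Set (Tup att dom) :=
  { u | IsTupleOn u ↑(attset Q \ H) ∧
      (∀ R ∈ Q, R.scheme ∩ H = ∅ → restrict u ↑R.scheme ∈ ReducedTuples Q Hv H η R) ∧
      (∀ X ∈ isolatedSet Q H, ∀ x : dom, u X = some x → x ∈ Rpp Q Hv H η X) }


/-- Let `Q` be a simple binary join query, `H ⊆ attset Q`,
`I` the set of isolated attributes, and `J ⊆ I` non-empty.  Let
`Q̃ = {R ∈ Q : scheme(R) ∩ (I \ J) = ∅}` and `H̃ = H ∩ attset Q̃`.  Then `J`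
is precisely the set of isolated attributes determined by `Q̃` and `H̃`. -/
theorem isolated_of_subquery [Finite att] [Countable dom] [Infinite dom]
    (Q : Finset (Relation att dom)) (hS : SimpleQ Q) (hB : BinaryQ Q)
    (H : Finset att) (hH : H ⊆ attset Q)
    (J : Finset att) (hJ : J ⊆ isolatedSet Q H) (hJne : J.Nonempty)
    (Qt : Finset (Relation att dom))
    (hQt : Qt = Q.filter fun R => R.scheme ∩ (isolatedSet Q H \ J) = ∅) :
    isolatedSet Qt (H ∩ attset Qt) = J := by
  classical
  subst hQt
  set Qt := Q.filter (fun R => R.scheme ∩ (isolatedSet Q H \ J) = ∅) with hQt'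
  have memI : ∀ X : att, X ∈ isolatedSet Q H ↔
      (X ∈ attset Q ∧ X ∉ H) ∧ ∀ R ∈ Q, X ∈ R.scheme → R.scheme \ H = {X} := by
    intro X
    simp [isolatedSet, Finset.mem_filter, Finset.mem_sdiff]
  apply Finset.ext
  intro X
  constructor
  · intro hX
    rw [isolatedSet, Finset.mem_filter, Finset.mem_sdiff] at hX
    obtain ⟨⟨hXat, hXnH⟩, hXiso⟩ := hX
    obtain ⟨R, hRQt, hXR⟩ := Finset.mem_biUnion.1 hXat
    have hRQ : R ∈ Q := (Finset.mem_filter.1 hRQt).1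
    have hXH : X ∉ H := fun h => hXnH (Finset.mem_inter.2 ⟨h, hXat⟩)
    have hXnIJ : X ∉ isolatedSet Q H \ J := by
      intro h
      have h2 := (Finset.mem_filter.1 hRQt).2
      have h3 : X ∈ R.scheme ∩ (isolatedSet Q H \ J) := Finset.mem_inter.2 ⟨hXR, h⟩
      rw [h2] at h3
      exact absurd h3 (Finset.notMem_empty X)
    have hall : ∀ R' ∈ Q, X ∈ R'.scheme → R' ∈ Qt := by
      intro R' hR' hXR'
      rw [hQt', Finset.mem_filter]
      refine ⟨hR', ?_⟩
      by_contra hne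
      obtain ⟨Z, hZ⟩ := Finset.nonempty_iff_ne_empty.2 hne
      obtain ⟨hZs, hZIJ⟩ := Finset.mem_inter.1 hZ
      have hZI : Z ∈ isolatedSet Q H := (Finset.mem_sdiff.1 hZIJ).1
      have hZiso := ((memI Z).1 hZI).2 R' hR' hZs
      have hXne : X ≠ Z := fun h => hXnIJ (h ▸ hZIJ)
      have : X ∈ R'.scheme \ H := Finset.mem_sdiff.2 ⟨hXR', hXH⟩
      rw [hZiso, Finset.mem_singleton] at this
      exact hXne this
    have hXI : X ∈ isolatedSet Q H := by
      rw [memI]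
      refine ⟨⟨Finset.mem_biUnion.2 ⟨R, hRQ, hXR⟩, hXH⟩, ?_⟩
      intro R' hR' hXR'
      have hR'Qt := hall R' hR' hXR'
      have hiso := hXiso R' hR'Qt hXR'
      apply Finset.Subset.antisymm
      · intro W hW
        rw [← hiso]
        obtain ⟨hWs, hWH⟩ := Finset.mem_sdiff.1 hW
        exact Finset.mem_sdiff.2 ⟨hWs, fun h => hWH (Finset.mem_inter.1 h).1⟩
      · intro W hW
        rw [Finset.mem_singleton] at hW
        subst hW
        exact Finset.mem_sdiff.2 ⟨hXR', hXH⟩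
    by_contra hXJ
    exact hXnIJ (Finset.mem_sdiff.2 ⟨hXI, hXJ⟩)
  · intro hXJ
    have hXI := hJ hXJ
    obtain ⟨⟨hXat, hXH⟩, hXiso⟩ := (memI X).1 hXI
    obtain ⟨R, hRQ, hXR⟩ := Finset.mem_biUnion.1 hXat
    have hinQt : ∀ R' ∈ Q, X ∈ R'.scheme → R' ∈ Qt := by
      intro R' hR' hXR'
      rw [hQt', Finset.mem_filter]
      refine ⟨hR', ?_⟩
      rw [Finset.eq_empty_iff_forall_notMem]
      intro Z hZ
      obtain ⟨hZs, hZIJ⟩ := Finset.mem_inter.1 hZ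
      obtain ⟨hZI, hZJ⟩ := Finset.mem_sdiff.1 hZIJ
      have hZH : Z ∉ H := ((memI Z).1 hZI).1.2
      have : Z ∈ R'.scheme \ H := Finset.mem_sdiff.2 ⟨hZs, hZH⟩
      rw [hXiso R' hR' hXR', Finset.mem_singleton] at this
      subst this
      exact hZJ hXJ
    have hXatQt : X ∈ attset Qt := Finset.mem_biUnion.2 ⟨R, hinQt R hRQ hXR, hXR⟩
    rw [isolatedSet, Finset.mem_filter, Finset.mem_sdiff]
    refine ⟨⟨hXatQt, fun h => hXH (Finset.mem_inter.1 h).1⟩, ?_⟩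
    intro R' hR'Qt hXR'
    have hR'Q : R' ∈ Q := (Finset.mem_filter.1 hR'Qt).1
    have hiso := hXiso R' hR'Q hXR'
    apply Finset.Subset.antisymm
    · intro W hW
      obtain ⟨hWs, hWHt⟩ := Finset.mem_sdiff.1 hW
      have hWH : W ∉ H := fun h =>
        hWHt (Finset.mem_inter.2 ⟨h, Finset.mem_biUnion.2 ⟨R', hR'Qt, hWs⟩⟩)
      rw [← hiso]
      exact Finset.mem_sdiff.2 ⟨hWs, hWH⟩
    · intro W hW
      rw [Finset.mem_singleton] at hW
      subst hW
      exact Finset.mem_sdiff.2 ⟨hXR', fun h => hXH (Finset.mem_inter.1 h).1⟩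

end BinaryJoins
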